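/- The number of games of plates and olives of length n in which the number of plate-remove moves (simple plus complex, not counting the final one) is at least 16n/log n is at most (2/e − c)^{n+o(n)} n^n for some constant c > 0; in particular it is asymptotically negligible compared to M_n ≥ (2n-1)!!. -/

import Mathlib

open Filter Asymptotics

/-- A plate-add move: an empty plate (a `0`) is put down. -/
def PPlus (a b : Multiset ℕ) : Prop := b = 0 ::ₘ a

/-- A first olive-add move: an olive is put down on an empty plate. -/
def OPlusF (a b : Multiset ℕ) : Prop := (0 : ℕ) ∈ a ∧ b = 1 ::ₘ a.erase 0

/-- A later olive-add move: an olive is put down on a plate already holding olives. -/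
def OPlusL (a b : Multiset ℕ) : Prop := ∃ x ∈ a, 0 < x ∧ b = (x + 1) ::ₘ a.erase x

/-- An olive-add move (first or later). -/
def OPlus (a b : Multiset ℕ) : Prop := OPlusF a b ∨ OPlusL a b

/-- An olive-remove move: an olive is removed from a nonempty plate. -/
def OMinus (a b : Multiset ℕ) : Prop := ∃ x ∈ a, 0 < x ∧ b = (x - 1) ::ₘ a.erase x

/-- A simple plate-remove move: an empty plate is removed. -/
def PMinusS (a b : Multiset ℕ) : Prop := a = 0 ::ₘ b

/-- A complex plate-remove move: the olives on two plates that both have olives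
are combined on one of them, and the other plate is removed. -/
def PMinusC (a b : Multiset ℕ) : Prop :=
  ∃ x ∈ a, ∃ y ∈ a.erase x, 0 < x ∧ 0 < y ∧ b = (x + y) ::ₘ (a.erase x).erase y

/-- A legal move of the game of plates and olives. -/
def Step (a b : Multiset ℕ) : Prop :=
  PPlus a b ∨ OPlus a b ∨ OMinus a b ∨ PMinusS a b ∨ PMinusC a b

/-- A game of plates and olives of length `n`: a sequence of `2n+3`
configurations (multisets recording the number of olives on each plate),
starting and ending at the empty table, linked by `2n+2` legal moves, with no
intermediate return to the empty table. -/
def IsGame (n : ℕ) (P : Fin (2 * n + 2 + 1) → Multiset ℕ) : Prop :=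
  P 0 = 0 ∧ P (Fin.last (2 * n + 2)) = 0 ∧
  (∀ i : Fin (2 * n + 2), Step (P i.castSucc) (P i.succ)) ∧
  (∀ i : Fin (2 * n + 2 + 1), i ≠ 0 → i ≠ Fin.last (2 * n + 2) → P i ≠ 0)

/-- `M n` is the number of games of plates and olives of length `n`. -/
noncomputable def M (n : ℕ) : ℕ := Nat.card {P : Fin (2 * n + 2 + 1) → Multiset ℕ // IsGame n P}

/-- The number of plate-remove moves of a game, not counting the final one. -/
noncomputable def pRemoves (n : ℕ) (P : Fin (2 * n + 2 + 1) → Multiset ℕ) : ℕ :=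
  Nat.card {i : Fin (2 * n + 2) // (i : ℕ) < 2 * n + 1 ∧
    (PMinusS (P i.castSucc) (P i.succ) ∨ PMinusC (P i.castSucc) (P i.succ))}

namespace S17

/-- The six move types. -/
def Move (t : Fin 6) (a b : Multiset ℕ) : Prop :=
  if t = 0 then PPlus a b else if t = 1 then OPlusF a b else if t = 2 then OPlusL a b
  else if t = 3 then OMinus a b else if t = 4 then PMinusS a b else PMinusC a b

open Classical in
/-- Classify a step. -/
noncomputable def classify (a b : Multiset ℕ) : Fin 6 :=
  if PPlus a b then 0 else if OPlusF a b then 1 else if OPlusL a b then 2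
  else if OMinus a b then 3 else if PMinusS a b then 4 else 5

lemma move_classify {a b : Multiset ℕ} (h : Step a b) : Move (classify a b) a b := by
  classical
  unfold classify Move
  split_ifs <;> first
    | assumption
    | (rcases h with h|h|h|h|h
       · simp_all
       · rcases h with h|h <;> simp_all
       all_goals simp_all)

/-- weights -/
def w (t : Fin 6) : ℕ := if t.val ≤ 1 then 0 else if t.val ≤ 3 then 1 else if t.val = 4 then 0 else 2
def dcard (t : Fin 6) : ℤ := if t.val = 0 then 1 else if t.val ≤ 3 then 0 else -1
def dsum (t : Fin 6) : ℤ := if t.val = 1 ∨ t.val = 2 then 1 else if t.val = 3 then -1 else 0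
def dnu (t : Fin 6) : ℤ := if t.val = 1 then 1 else if t.val = 5 then -1 else 0


lemma card_move {t a b} (h : Move t a b) :
    (Multiset.card b : ℤ) = Multiset.card a + dcard t := by
  fin_cases t
  · simp only [Move] at h; norm_num at h
    subst h; simp [dcard, dsum]
  · simp only [Move] at h; norm_num at h
    obtain ⟨h0, rfl⟩ := h
    have h1 := Multiset.card_erase_add_one h0
    simp only [Multiset.card_cons]; norm_num [dcard]
    omega
  · simp only [Move] at h; norm_num at h
    obtain ⟨x, hx, -, rfl⟩ := h
    have h1 := Multiset.card_erase_add_one hx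
    simp only [Multiset.card_cons]; norm_num [dcard]
    omega
  · simp only [Move] at h; norm_num at h
    obtain ⟨x, hx, -, rfl⟩ := h
    have h1 := Multiset.card_erase_add_one hx
    simp only [Multiset.card_cons]; norm_num [dcard]
    omega
  · simp only [Move] at h; norm_num at h
    subst h
    have key : (Multiset.card b : ℤ) = Multiset.card ((0:ℕ) ::ₘ b) + (-1) := by
      simp [Multiset.card_cons]
    simpa [dcard] using key
  · simp only [Move] at h; norm_num at h
    obtain ⟨x, hx, y, hy, -, -, rfl⟩ := h
    have h1 := Multiset.card_erase_add_one hx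
    have h2 := Multiset.card_erase_add_one hy
    simp only [Multiset.card_cons]; norm_num [dcard]
    omega

lemma sum_move {t a b} (h : Move t a b) :
    (b.sum : ℤ) = (a.sum : ℤ) + dsum t := by
  fin_cases t
  · simp only [Move] at h; norm_num at h
    subst h; simp [dcard, dsum]
  · simp only [Move] at h; norm_num at h
    obtain ⟨h0, rfl⟩ := h
    have h1 := Multiset.sum_erase h0
    have key : (((1 ::ₘ a.erase 0).sum : ℕ) : ℤ) = a.sum + 1 := by
      simp only [Multiset.sum_cons]; omega
    simpa [dsum] using key
  · simp only [Move] at h; norm_num at h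
    obtain ⟨x, hx, -, rfl⟩ := h
    have h1 := Multiset.sum_erase hx
    have key : ((((x+1) ::ₘ a.erase x).sum : ℕ) : ℤ) = a.sum + 1 := by
      simp only [Multiset.sum_cons]; omega
    simpa [dsum] using key
  · simp only [Move] at h; norm_num at h
    obtain ⟨x, hx, hxp, rfl⟩ := h
    have h1 := Multiset.sum_erase hx
    have key : ((((x-1) ::ₘ a.erase x).sum : ℕ) : ℤ) = a.sum + (-1) := by
      simp only [Multiset.sum_cons]; omega
    simpa [dsum] using key
  · simp only [Move] at h; norm_num at h
    subst h; simp [dcard, dsum]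
  · simp only [Move] at h; norm_num at h
    obtain ⟨x, hx, y, hy, -, -, rfl⟩ := h
    have h1 := Multiset.sum_erase hx
    have h2 := Multiset.sum_erase hy
    have key : ((((x+y) ::ₘ (a.erase x).erase y).sum : ℕ) : ℤ) = a.sum + 0 := by
      simp only [Multiset.sum_cons]; omega
    simpa [dsum] using key

/-- Number of nonempty plates. -/
def nu (a : Multiset ℕ) : ℕ := Multiset.card (Multiset.filter (fun y => 0 < y) a)

lemma nu_cons_pos {x : ℕ} (hx : 0 < x) (s : Multiset ℕ) : nu (x ::ₘ s) = nu s + 1 := by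
  simp [nu, Multiset.filter_cons, hx]
lemma nu_cons_zero (s : Multiset ℕ) : nu ((0:ℕ) ::ₘ s) = nu s := by
  simp [nu, Multiset.filter_cons]

lemma nu_move {t a b} (h : Move t a b) : (nu b : ℤ) ≤ nu a + dnu t := by
  fin_cases t
  · simp only [Move] at h; norm_num at h
    subst h; simp [nu_cons_zero, dnu]
  · simp only [Move] at h; norm_num at h
    obtain ⟨h0, rfl⟩ := h
    rw [← Multiset.cons_erase h0, nu_cons_zero, nu_cons_pos one_pos]
    simp [dnu]
  · simp only [Move] at h; norm_num at h
    obtain ⟨x, hx, hxp, rfl⟩ := h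
    rw [← Multiset.cons_erase hx, nu_cons_pos hxp, nu_cons_pos (Nat.succ_pos x)]
    simp [dnu]
  · simp only [Move] at h; norm_num at h
    obtain ⟨x, hx, hxp, rfl⟩ := h
    rw [← Multiset.cons_erase hx, nu_cons_pos hxp]
    rcases Nat.eq_zero_or_pos (x - 1) with h1 | h1
    · rw [h1, nu_cons_zero]; simp [dnu]
    · rw [nu_cons_pos h1]; simp [dnu]
  · simp only [Move] at h; norm_num at h
    subst h; rw [nu_cons_zero]; simp [dnu]
  · simp only [Move] at h; norm_num at h
    obtain ⟨x, hx, y, hy, hxp, hyp, rfl⟩ := h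
    have e1 : y ::ₘ ((a.erase x).erase y) = a.erase x := Multiset.cons_erase hy
    have e2 : x ::ₘ (a.erase x) = a := Multiset.cons_erase hx
    rw [← e2, ← e1, nu_cons_pos (by positivity), nu_cons_pos hxp, nu_cons_pos hyp]
    norm_num [dnu]


lemma exists_inj_of_cover {β γ : Type*} (P : β → Prop) (F : Finset γ) (f : γ → β)
    (hs : ∀ b, P b → ∃ x ∈ F, f x = b) {m : ℕ} (hm : F.card ≤ m) :
    ∃ g : {b // P b} → Fin m, Function.Injective g := by
  classical
  have pick : ∀ b : {b // P b}, {x : F // f x = b} := fun b => by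
    have h := hs b b.2
    exact ⟨⟨h.choose, h.choose_spec.1⟩, h.choose_spec.2⟩
  refine ⟨fun b => Fin.castLE hm (F.equivFin (pick b).1), fun b1 b2 h => ?_⟩
  have h2 : (pick b1).1 = (pick b2).1 :=
    F.equivFin.injective (Fin.castLE_injective hm h)
  have e1 := (pick b1).2
  have e2 := (pick b2).2
  rw [h2, e2] at e1
  exact Subtype.ext e1.symm

/-- The distinct positive plate sizes. -/
def D (a : Multiset ℕ) : Finset ℕ := a.toFinset.filter (fun x => 0 < x)

lemma mem_D {a : Multiset ℕ} {x : ℕ} (hx : x ∈ a) (hp : 0 < x) : x ∈ D a := by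
  simp [D, Multiset.mem_toFinset, hx, hp]

lemma toFinset_sum_le (a : Multiset ℕ) : ∑ x ∈ a.toFinset, x ≤ a.sum := by
  induction a using Multiset.induction with
  | empty => simp
  | cons x s ih =>
    rw [Multiset.toFinset_cons, Multiset.sum_cons]
    by_cases hx : x ∈ s.toFinset
    · rw [Finset.insert_eq_self.2 hx]; omega
    · rw [Finset.sum_insert hx]; omega

lemma sum_distinct (s : Finset ℕ) (hs : ∀ x ∈ s, 0 < x) :
    s.card * (s.card + 1) ≤ 2 * ∑ x ∈ s, x := by
  induction s using Finset.induction_on_max with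
  | empty => simp
  | insert a s hlt ih =>
    have ha : 0 < a := hs a (Finset.mem_insert_self a s)
    have hns : a ∉ s := fun h => lt_irrefl a (hlt a h)
    have hsub : s ⊆ Finset.Ioo 0 a := fun x hx =>
      Finset.mem_Ioo.2 ⟨hs x (Finset.mem_insert_of_mem hx), hlt x hx⟩
    have hcard : s.card ≤ a - 1 := by
      have := Finset.card_le_card hsub
      simpa [Nat.card_Ioo] using this
    have ih' := ih (fun x hx => hs x (Finset.mem_insert_of_mem hx))
    rw [Finset.card_insert_of_notMem hns, Finset.sum_insert hns]
    have : s.card + 1 ≤ a := by omega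
    nlinarith

lemma card_D_le {n : ℕ} (hn : 2 ≤ n) {a : Multiset ℕ} (ha : a.sum ≤ n + 1) :
    (D a).card ≤ Nat.sqrt (3 * n) := by
  apply Nat.le_sqrt.2
  have h1 : ∑ x ∈ D a, x ≤ a.sum := by
    calc ∑ x ∈ D a, x ≤ ∑ x ∈ a.toFinset, x :=
          Finset.sum_le_sum_of_subset (Finset.filter_subset _ _)
      _ ≤ a.sum := toFinset_sum_le a
  have h2 := sum_distinct (D a) (fun x hx => (Finset.mem_filter.1 hx).2)
  nlinarith

lemma exists_move_inj {n : ℕ} (hn : 2 ≤ n) {a : Multiset ℕ} (ha : a.sum ≤ n + 1) (t : Fin 6) :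
    ∃ g : {b : Multiset ℕ // Move t a b} → Fin (Nat.sqrt (3 * n) ^ w t),
      Function.Injective g := by
  have hK : 1 ≤ Nat.sqrt (3 * n) := Nat.le_sqrt.2 (by omega)
  have hD := card_D_le hn ha
  fin_cases t
  · refine exists_inj_of_cover _ {(0 : ℕ) ::ₘ a} id (fun b hb => ?_) ?_
    · simp only [Move] at hb; norm_num at hb
      exact ⟨_, Finset.mem_singleton_self _, hb.symm⟩
    · simp [w]
  · refine exists_inj_of_cover _ {(1 : ℕ) ::ₘ a.erase 0} id (fun b hb => ?_) ?_
    · simp only [Move] at hb; norm_num at hb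
      exact ⟨_, Finset.mem_singleton_self _, hb.2.symm⟩
    · simp [w]
  · refine exists_inj_of_cover _ (D a) (fun x => (x + 1) ::ₘ a.erase x)
      (fun b hb => ?_) ?_
    · simp only [Move] at hb; norm_num at hb
      obtain ⟨x, hx, hxp, rfl⟩ := hb
      exact ⟨x, mem_D hx hxp, rfl⟩
    · simpa [w] using hD
  · refine exists_inj_of_cover _ (D a) (fun x => (x - 1) ::ₘ a.erase x)
      (fun b hb => ?_) ?_
    · simp only [Move] at hb; norm_num at hb
      obtain ⟨x, hx, hxp, rfl⟩ := hb
      exact ⟨x, mem_D hx hxp, rfl⟩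
    · simpa [w] using hD
  · refine exists_inj_of_cover _ {a.erase 0} id (fun b hb => ?_) ?_
    · simp only [Move] at hb; norm_num at hb
      refine ⟨_, Finset.mem_singleton_self _, ?_⟩
      rw [hb]; simp
    · simp [w]
  · refine exists_inj_of_cover _ ((D a) ×ˢ (D a))
      (fun p => (p.1 + p.2) ::ₘ (a.erase p.1).erase p.2) (fun b hb => ?_) ?_
    · simp only [Move] at hb; norm_num at hb
      obtain ⟨x, hx, y, hy, hxp, hyp, rfl⟩ := hb
      exact ⟨(x, y), Finset.mem_product.2
        ⟨mem_D hx hxp, mem_D (Multiset.mem_of_mem_erase hy) hyp⟩, rfl⟩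
    · rw [Finset.card_product]
      calc (D a).card * (D a).card ≤ Nat.sqrt (3*n) * Nat.sqrt (3*n) :=
            Nat.mul_le_mul hD hD
        _ = Nat.sqrt (3*n) ^ w ⟨5, by omega⟩ := by simp [w]; ring


section Game

variable {n : ℕ} {P : Fin (2 * n + 2 + 1) → Multiset ℕ}

/-- The configuration after `k` moves, as a function of `ℕ`. -/
def cfg (n : ℕ) (P : Fin (2 * n + 2 + 1) → Multiset ℕ) (k : ℕ) : Multiset ℕ :=
  P ⟨min k (2 * n + 2), by omega⟩

/-- The type of the `k`-th move. -/
noncomputable def tau (n : ℕ) (P : Fin (2 * n + 2 + 1) → Multiset ℕ) (k : ℕ) : Fin 6 :=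
  classify (cfg n P k) (cfg n P (k + 1))

lemma cfg_castSucc (i : Fin (2 * n + 2)) : cfg n P i.val = P i.castSucc := by
  unfold cfg; congr 1; apply Fin.ext; simp; try omega
lemma cfg_succ (i : Fin (2 * n + 2)) : cfg n P (i.val + 1) = P i.succ := by
  unfold cfg; congr 1; apply Fin.ext; simp; try omega
lemma cfg_zero (hP : IsGame n P) : cfg n P 0 = 0 := by
  unfold cfg
  have : (⟨min 0 (2 * n + 2), by omega⟩ : Fin (2 * n + 2 + 1)) = 0 := by
    apply Fin.ext; simp
  rw [this]; exact hP.1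
lemma cfg_last (hP : IsGame n P) : cfg n P (2 * n + 2) = 0 := by
  unfold cfg
  have : (⟨min (2 * n + 2) (2 * n + 2), by omega⟩ : Fin (2 * n + 2 + 1)) =
      Fin.last (2 * n + 2) := by apply Fin.ext; simp [Fin.last]
  rw [this]; exact hP.2.1

lemma step_cfg (hP : IsGame n P) {k : ℕ} (hk : k < 2 * n + 2) :
    Step (cfg n P k) (cfg n P (k + 1)) := by
  have h := hP.2.2.1 ⟨k, hk⟩
  rwa [← cfg_castSucc (P := P) ⟨k, hk⟩, ← cfg_succ (P := P) ⟨k, hk⟩] at h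

lemma move_cfg (hP : IsGame n P) {k : ℕ} (hk : k < 2 * n + 2) :
    Move (tau n P k) (cfg n P k) (cfg n P (k + 1)) :=
  move_classify (step_cfg hP hk)

lemma sum_tele (hP : IsGame n P) (F : Multiset ℕ → ℤ) (d : Fin 6 → ℤ)
    (hF : ∀ t a b, Move t a b → F b = F a + d t) {j : ℕ} (hj : j ≤ 2 * n + 2) :
    F (cfg n P j) = F (cfg n P 0) + ∑ k ∈ Finset.range j, d (tau n P k) := by
  induction j with
  | zero => simp
  | succ j ih =>
    rw [Finset.sum_range_succ, ← add_assoc, ← ih (by omega),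
      hF _ _ _ (move_cfg hP (by omega))]

lemma sum_dcard (hP : IsGame n P) :
    ∑ k ∈ Finset.range (2 * n + 2), dcard (tau n P k) = 0 := by
  have h := sum_tele hP (fun a => (Multiset.card a : ℤ)) dcard
    (fun t a b hm => card_move hm) (le_refl (2 * n + 2))
  rw [cfg_zero hP, cfg_last hP] at h
  simpa using h.symm

lemma sum_dsum (hP : IsGame n P) :
    ∑ k ∈ Finset.range (2 * n + 2), dsum (tau n P k) = 0 := by
  have h := sum_tele hP (fun a => ((a.sum : ℕ) : ℤ)) dsum
    (fun t a b hm => sum_move hm) (le_refl (2 * n + 2))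
  rw [cfg_zero hP, cfg_last hP] at h
  simpa using h.symm

lemma sum_dnu (hP : IsGame n P) :
    (0 : ℤ) ≤ ∑ k ∈ Finset.range (2 * n + 2), dnu (tau n P k) := by
  have h : ∀ k ∈ Finset.range (2 * n + 2),
      (nu (cfg n P (k+1)) : ℤ) - nu (cfg n P k) ≤ dnu (tau n P k) := by
    intro k hk
    have := nu_move (move_cfg hP (Finset.mem_range.1 hk))
    omega
  have h2 := Finset.sum_le_sum h
  rw [Finset.sum_range_sub (fun k => (nu (cfg n P k) : ℤ))] at h2
  rw [cfg_zero hP, cfg_last hP] at h2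
  simpa [nu] using h2

def e12 (t : Fin 6) : ℤ := if t.val = 1 ∨ t.val = 2 then 1 else 0
def e3 (t : Fin 6) : ℤ := if t.val = 3 then 1 else 0
def e45 (t : Fin 6) : ℤ := if 4 ≤ t.val then 1 else 0

lemma dsum_eq : ∀ t : Fin 6, dsum t = e12 t - e3 t := by decide
lemma e12_e3_le_one : ∀ t : Fin 6, e12 t + e3 t ≤ 1 := by decide
lemma e12_nonneg : ∀ t : Fin 6, 0 ≤ e12 t := by decide
lemma magic : ∀ t : Fin 6, (w t : ℤ) + e45 t + dcard t + dnu t ≤ 1 := by decide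

/-- The total number of olives is at most `n + 1` throughout the game. -/
lemma sum_cfg_le (hP : IsGame n P) {j : ℕ} (hj : j ≤ 2 * n + 2) :
    (cfg n P j).sum ≤ n + 1 := by
  have hsplit : ∑ k ∈ Finset.range (2*n+2), e12 (tau n P k)
      = ∑ k ∈ Finset.range (2*n+2), e3 (tau n P k) := by
    have := sum_dsum hP
    rw [Finset.sum_congr rfl (fun k _ => dsum_eq (tau n P k)),
      Finset.sum_sub_distrib] at this
    omega
  have hle1 : ∑ k ∈ Finset.range (2*n+2), (e12 (tau n P k) + e3 (tau n P k))
      ≤ ((2*n+2 : ℕ) : ℤ) := by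
    have h := Finset.sum_le_sum (s := Finset.range (2*n+2))
      (f := fun k => e12 (tau n P k) + e3 (tau n P k)) (g := fun _ => (1:ℤ))
      (fun k _ => e12_e3_le_one _)
    simpa using h
  rw [Finset.sum_add_distrib] at hle1
  have he12 : ∑ k ∈ Finset.range (2*n+2), e12 (tau n P k) ≤ n + 1 := by
    rw [hsplit] at hle1 ⊢
    push_cast at hle1
    omega
  have htel := sum_tele hP (fun a => ((a.sum : ℕ) : ℤ)) dsum
    (fun t a b hm => sum_move hm) hj
  rw [cfg_zero hP] at htel
  have hle2 : ∑ k ∈ Finset.range j, dsum (tau n P k)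
      ≤ ∑ k ∈ Finset.range j, e12 (tau n P k) := by
    apply Finset.sum_le_sum
    intro k _
    have h1 := dsum_eq (tau n P k)
    have h2 : (0:ℤ) ≤ e3 (tau n P k) := by unfold e3; split <;> norm_num
    omega
  have hle3 : ∑ k ∈ Finset.range j, e12 (tau n P k)
      ≤ ∑ k ∈ Finset.range (2*n+2), e12 (tau n P k) := by
    apply Finset.sum_le_sum_of_subset_of_nonneg
    · exact Finset.range_subset_range.2 hj
    · exact fun k _ _ => e12_nonneg _
  have : ((cfg n P j).sum : ℤ) ≤ n + 1 := by
    simp only [Multiset.sum_zero] at htel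
    omega
  exact_mod_cast this

lemma classify_val_ge4 {a b : Multiset ℕ} (h : PMinusS a b ∨ PMinusC a b) :
    4 ≤ (classify a b).val := by
  classical
  have hcard : (Multiset.card b : ℤ) = Multiset.card a - 1 := by
    rcases h with h | h
    · rw [h]; simp
    · obtain ⟨x, hx, y, hy, -, -, rfl⟩ := h
      have h1 := Multiset.card_erase_add_one hx
      have h2 := Multiset.card_erase_add_one hy
      simp only [Multiset.card_cons]
      push_cast at h1 h2 ⊢
      omega
  unfold classify
  split_ifs with h0 h1 h2 h3
  · exfalso; rw [h0] at hcard; simp at hcard; omega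
  · exfalso
    obtain ⟨hm, rfl⟩ := h1
    have h1 := Multiset.card_erase_add_one hm
    simp only [Multiset.card_cons] at hcard
    omega
  · exfalso
    obtain ⟨x, hx, -, rfl⟩ := h2
    have h1 := Multiset.card_erase_add_one hx
    simp only [Multiset.card_cons] at hcard
    omega
  · exfalso
    obtain ⟨x, hx, -, rfl⟩ := h3
    have h1 := Multiset.card_erase_add_one hx
    simp only [Multiset.card_cons] at hcard
    omega
  · decide
  · decide

/-- Main counting inequality: total weight plus number of plate removes is at
most the number of moves. -/
lemma weight_bound (hP : IsGame n P) :
    (∑ k ∈ Finset.range (2*n+2), w (tau n P k)) + pRemoves n P ≤ 2*n+2 := by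
  classical
  -- pRemoves ≤ number of indices with tau ≥ 4
  set F : Finset ℕ := (Finset.range (2*n+2)).filter (fun k => 4 ≤ (tau n P k).val)
    with hF
  have hpr : pRemoves n P ≤ F.card := by
    rw [← Nat.card_eq_finsetCard]
    apply Nat.card_le_card_of_injective
      (f := fun i : {i : Fin (2 * n + 2) // (i : ℕ) < 2 * n + 1 ∧
        (PMinusS (P i.castSucc) (P i.succ) ∨ PMinusC (P i.castSucc) (P i.succ))} =>
        (⟨(i.1 : ℕ), by
          simp only [hF, Finset.mem_filter, Finset.mem_range]
          refine ⟨i.1.isLt, ?_⟩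
          have := i.2.2
          rw [← cfg_castSucc (P := P) i.1, ← cfg_succ (P := P) i.1] at this
          exact classify_val_ge4 this⟩ : {x // x ∈ F}))
    intro i j hij
    apply Subtype.ext; apply Fin.ext
    exact congrArg Subtype.val hij
  have hcardF : (F.card : ℤ) = ∑ k ∈ Finset.range (2*n+2), e45 (tau n P k) := by
    rw [hF]
    rw [show ∑ k ∈ Finset.range (2*n+2), e45 (tau n P k)
        = ∑ k ∈ Finset.range (2*n+2),
            (if 4 ≤ (tau n P k).val then (1:ℤ) else 0) from rfl]
    rw [Finset.sum_boole]
  have hmagic : ∑ k ∈ Finset.range (2*n+2), ((w (tau n P k) : ℤ) + e45 (tau n P k)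
      + dcard (tau n P k) + dnu (tau n P k)) ≤ ((2*n+2 : ℕ) : ℤ) := by
    have h := Finset.sum_le_sum (s := Finset.range (2*n+2))
      (f := fun k => (w (tau n P k) : ℤ) + e45 (tau n P k) + dcard (tau n P k)
        + dnu (tau n P k)) (g := fun _ => (1:ℤ)) (fun k _ => magic _)
    simpa using h
  rw [Finset.sum_add_distrib, Finset.sum_add_distrib, Finset.sum_add_distrib] at hmagic
  have h0 := sum_dcard hP
  have h1 := sum_dnu hP
  have hcast : ∑ k ∈ Finset.range (2*n+2), (w (tau n P k) : ℤ)
      = ((∑ k ∈ Finset.range (2*n+2), w (tau n P k) : ℕ) : ℤ) := by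
    push_cast; rfl
  omega

end Game


section Count

variable {n : ℕ}

open Classical in
noncomputable def enc (hn : 2 ≤ n) (a : Multiset ℕ) (t : Fin 6) :
    {b // Move t a b} → Fin (Nat.sqrt (3 * n) ^ w t) :=
  if h : ∃ g : {b // Move t a b} → Fin (Nat.sqrt (3 * n) ^ w t), Function.Injective g
  then h.choose
  else fun _ => ⟨0, by
    have h1 : 0 < Nat.sqrt (3 * n) := Nat.le_sqrt.2 (by omega)
    exact pow_pos h1 _⟩

lemma enc_injective (hn : 2 ≤ n) {a : Multiset ℕ} (ha : a.sum ≤ n + 1) (t : Fin 6) :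
    Function.Injective (enc hn a t) := by
  classical
  unfold enc
  rw [dif_pos (exists_move_inj hn ha t)]
  exact (exists_move_inj hn ha t).choose_spec

open Classical in
noncomputable def dec1 (hn : 2 ≤ n) (a : Multiset ℕ) (t : Fin 6)
    (v : Fin (Nat.sqrt (3 * n) ^ w t)) : Multiset ℕ :=
  if h : ∃ b : {b // Move t a b}, enc hn a t b = v then h.choose.1 else 0

lemma dec1_enc (hn : 2 ≤ n) {a : Multiset ℕ} (ha : a.sum ≤ n + 1) (t : Fin 6)
    (b : {b // Move t a b}) : dec1 hn a t (enc hn a t b) = b.1 := by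
  classical
  unfold dec1
  have hex : ∃ b' : {b // Move t a b}, enc hn a t b' = enc hn a t b := ⟨b, rfl⟩
  rw [dif_pos hex]
  exact congrArg Subtype.val (enc_injective hn ha t hex.choose_spec)

noncomputable def decSeq (hn : 2 ≤ n) (τ : Fin (2 * n + 2) → Fin 6)
    (σ : ∀ i, Fin (Nat.sqrt (3 * n) ^ w (τ i))) : ℕ → Multiset ℕ
  | 0 => 0
  | (k + 1) => if h : k < 2 * n + 2
      then dec1 hn (decSeq hn τ σ k) (τ ⟨k, h⟩) (σ ⟨k, h⟩) else 0

/-- per-game move-type data -/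
noncomputable def tauF (n : ℕ) (P : Fin (2 * n + 2 + 1) → Multiset ℕ) :
    Fin (2 * n + 2) → Fin 6 := fun i => tau n P i.val

noncomputable def sigF (hn : 2 ≤ n) {P : Fin (2 * n + 2 + 1) → Multiset ℕ}
    (hP : IsGame n P) : ∀ i : Fin (2 * n + 2), Fin (Nat.sqrt (3 * n) ^ w (tauF n P i)) :=
  fun i => enc hn (cfg n P i.val) (tau n P i.val)
    ⟨cfg n P (i.val + 1), move_cfg hP i.isLt⟩

lemma dec_correct (hn : 2 ≤ n) {P : Fin (2 * n + 2 + 1) → Multiset ℕ}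
    (hP : IsGame n P) : ∀ k, k ≤ 2 * n + 2 →
    decSeq hn (tauF n P) (sigF hn hP) k = cfg n P k := by
  intro k
  induction k with
  | zero => intro _; rw [cfg_zero hP]; rfl
  | succ k ih =>
    intro hk
    have hk' : k < 2 * n + 2 := by omega
    show decSeq hn (tauF n P) (sigF hn hP) (k + 1) = _
    rw [decSeq, dif_pos hk', ih (by omega)]
    have : (⟨k, hk'⟩ : Fin (2 * n + 2)).val = k := rfl
    exact dec1_enc hn (sum_cfg_le hP (by omega)) (tau n P k)
      ⟨cfg n P (k + 1), move_cfg hP hk'⟩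

lemma count_bound (hn : 2 ≤ n) (r : ℕ)
    (Q : (Fin (2 * n + 2 + 1) → Multiset ℕ) → Prop)
    (hQ : ∀ P, IsGame n P → Q P → r ≤ pRemoves n P) :
    Nat.card {P : Fin (2 * n + 2 + 1) → Multiset ℕ // IsGame n P ∧ Q P}
      ≤ 6 ^ (2 * n + 2) * Nat.sqrt (3 * n) ^ (2 * n + 2 - r) := by
  classical
  set K := Nat.sqrt (3 * n) with hK
  have hK1 : 1 ≤ K := Nat.le_sqrt.2 (by omega)
  set m := 2 * n + 2 - r with hm
  -- the target type
  set T := {τ : Fin (2 * n + 2) → Fin 6 // ∑ i, w (τ i) ≤ m} with hT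
  -- the encoding map
  have feas : ∀ P : Fin (2 * n + 2 + 1) → Multiset ℕ, IsGame n P → Q P →
      ∑ i, w (tauF n P i) ≤ m := by
    intro P hP hq
    have hr := hQ P hP hq
    have h1 := weight_bound hP
    have h2 : ∑ i, w (tauF n P i) = ∑ k ∈ Finset.range (2 * n + 2), w (tau n P k) :=
      Fin.sum_univ_eq_sum_range (fun k => w (tau n P k)) (2 * n + 2)
    omega
  let Φ : {P : Fin (2 * n + 2 + 1) → Multiset ℕ // IsGame n P ∧ Q P} →
      Σ τ : T, ∀ i : Fin (2 * n + 2), Fin (K ^ w (τ.1 i)) :=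
    fun x => ⟨⟨tauF n x.1, feas x.1 x.2.1 x.2.2⟩, sigF hn x.2.1⟩
  have hΦ : Function.Injective Φ := by
    have hleft : ∀ x, (fun i : Fin (2 * n + 2 + 1) =>
        decSeq hn (Φ x).1.1 (Φ x).2 i.val) = x.1 := by
      intro x
      funext i
      show decSeq hn (tauF n x.1) (sigF hn x.2.1) i.val = x.1 i
      rw [dec_correct hn x.2.1 i.val (by omega)]
      unfold cfg
      exact congrArg x.1 (Fin.ext (by simp; omega))
    intro x y hxy
    apply Subtype.ext
    rw [← hleft x, ← hleft y, hxy]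
  calc Nat.card {P : Fin (2 * n + 2 + 1) → Multiset ℕ // IsGame n P ∧ Q P}
      ≤ Nat.card (Σ τ : T, ∀ i : Fin (2 * n + 2), Fin (K ^ w (τ.1 i))) :=
        Nat.card_le_card_of_injective Φ hΦ
    _ ≤ 6 ^ (2 * n + 2) * K ^ m := by
        rw [Nat.card_eq_fintype_card, Fintype.card_sigma]
        have hterm : ∀ τ : T, Fintype.card (∀ i : Fin (2 * n + 2), Fin (K ^ w (τ.1 i)))
            ≤ K ^ m := by
          intro τ
          rw [Fintype.card_pi]
          calc ∏ i : Fin (2 * n + 2), Fintype.card (Fin (K ^ w (τ.1 i)))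
              = ∏ i : Fin (2 * n + 2), K ^ w (τ.1 i) := by
                apply Finset.prod_congr rfl; intro i _; exact Fintype.card_fin _
            _ = K ^ (∑ i, w (τ.1 i)) := Finset.prod_pow_eq_pow_sum _ _ _
            _ ≤ K ^ m := Nat.pow_le_pow_right hK1 τ.2
        calc ∑ τ : T, Fintype.card (∀ i : Fin (2 * n + 2), Fin (K ^ w (τ.1 i)))
            ≤ ∑ _τ : T, K ^ m := Finset.sum_le_sum (fun τ _ => hterm τ)
          _ = Fintype.card T * K ^ m := by
              rw [Finset.sum_const, Finset.card_univ, smul_eq_mul]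
          _ ≤ 6 ^ (2 * n + 2) * K ^ m := by
              apply Nat.mul_le_mul_right
              calc Fintype.card T ≤ Fintype.card (Fin (2 * n + 2) → Fin 6) :=
                    Fintype.card_subtype_le _
                _ = 6 ^ (2 * n + 2) := by
                    rw [Fintype.card_fun, Fintype.card_fin, Fintype.card_fin]

end Count


section Numeric

lemma nat_growth (n : ℕ) (hn : 4 ≤ n) : 108 * n ≤ 6 ^ n := by
  induction n, hn using Nat.le_induction with
  | base => norm_num
  | succ n hn ih =>
    have h : 6 ^ (n + 1) = 6 * 6 ^ n := by ring
    omega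

lemma exp8_lb : (1296 : ℝ) ≤ Real.exp 8 := by
  have h1 : Real.exp 8 = Real.exp 1 ^ 8 := by
    rw [← Real.exp_nat_mul]; norm_num
  have h2 : (2.7 : ℝ) ≤ Real.exp 1 := by
    have := Real.exp_one_gt_d9; linarith
  have h3 : (2.7 : ℝ) ^ 8 ≤ Real.exp 1 ^ 8 := by
    apply pow_le_pow_left₀ (by norm_num) h2
  rw [h1]
  nlinarith [h3]

lemma exp8_ub : Real.exp 8 ≤ 4000 := by
  have h1 : Real.exp 8 = Real.exp 1 ^ 8 := by
    rw [← Real.exp_nat_mul]; norm_num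
  have h2 : Real.exp 1 ≤ (2.7182818286 : ℝ) := le_of_lt Real.exp_one_lt_d9
  have h3 : Real.exp 1 ^ 8 ≤ (2.7182818286 : ℝ) ^ 8 :=
    pow_le_pow_left₀ (Real.exp_pos 1).le h2 8
  have h4 : (2.7182818286 : ℝ) ^ 8 ≤ 4000 := by norm_num
  linarith

end Numeric

end S17

open S17 in
theorem stmt_17 :
    ∃ c : ℝ, 0 < c ∧ ∃ f : ℕ → ℝ, f =o[atTop] (fun n : ℕ => (n : ℝ)) ∧
      ∀ᶠ n : ℕ in atTop,
        (Nat.card {P : Fin (2 * n + 2 + 1) → Multiset ℕ // IsGame n P ∧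
            16 * (n : ℝ) / Real.log n ≤ pRemoves n P} : ℝ) ≤
          (2 / Real.exp 1 - c) ^ ((n : ℝ) + f n) * (n : ℝ) ^ (n : ℝ) := by
  refine ⟨2 / Real.exp 1 - 1/2, ?_, fun _ => 0, Asymptotics.isLittleO_zero _ _, ?_⟩
  · have h := Real.exp_one_lt_d9
    have he := Real.exp_pos 1
    have h2 : (2:ℝ)/4 < 2 / Real.exp 1 :=
      div_lt_div_of_pos_left (by norm_num) he (by linarith)
    linarith
  · rw [Filter.eventually_atTop]
    refine ⟨4000, fun n hn => ?_⟩
    have hbase : 2 / Real.exp 1 - (2 / Real.exp 1 - 1/2) = (1/2 : ℝ) := by ring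
    rw [hbase]
    have hexp0 : (n:ℝ) + (fun _ : ℕ => (0:ℝ)) n = (n:ℝ) := by simp
    rw [hexp0]
    have hn2 : 2 ≤ n := by omega
    have hnR : (4000:ℝ) ≤ (n:ℝ) := by exact_mod_cast hn
    have hn0R : (0:ℝ) < n := by linarith
    have hlog8 : (8:ℝ) ≤ Real.log n := by
      rw [Real.le_log_iff_exp_le hn0R]
      calc Real.exp 8 ≤ 4000 := exp8_ub
        _ ≤ (n:ℝ) := hnR
    have hlogpos : (0:ℝ) < Real.log n := by linarith
    set r := ⌈16 * (n:ℝ) / Real.log n⌉₊ with hrdef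
    set K := Nat.sqrt (3*n) with hKdef
    set M := 2*n+2 - r with hMdef
    have hbound := count_bound hn2 r
      (fun P => 16 * (n : ℝ) / Real.log n ≤ pRemoves n P)
      (fun P _ h => Nat.ceil_le.2 h)
    have hcard : (Nat.card {P : Fin (2 * n + 2 + 1) → Multiset ℕ // IsGame n P ∧
        16 * (n : ℝ) / Real.log n ≤ pRemoves n P} : ℝ)
        ≤ (6:ℝ)^(2*n+2) * (K:ℝ)^M := by exact_mod_cast hbound
    have hrge : 16*(n:ℝ)/Real.log n ≤ (r:ℝ) := Nat.le_ceil _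
    have hrle : r ≤ 2*n+2 := by
      rw [hrdef]
      apply Nat.ceil_le.2
      rw [div_le_iff₀ hlogpos]
      push_cast
      nlinarith
    have hMcast : (M:ℝ) = 2*(n:ℝ)+2 - r := by
      rw [hMdef]
      have h := Nat.cast_sub (R := ℝ) hrle
      rw [h]; push_cast; ring
    have hexpo : (M:ℝ)/2 ≤ ((n:ℝ)+1) - 8*(n:ℝ)/Real.log n := by
      rw [hMcast]
      have h16 : 16*(n:ℝ)/Real.log n = 2 * (8*(n:ℝ)/Real.log n) := by ring
      rw [h16] at hrge
      linarith
    have hKle : (K:ℝ) ≤ (3*(n:ℝ))^((1:ℝ)/2) := by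
      rw [← Real.sqrt_eq_rpow]
      rw [Real.le_sqrt (by positivity) (by positivity)]
      have h := Nat.sqrt_le' (3*n)
      calc ((K:ℝ))^2 = ((K^2 : ℕ) : ℝ) := by push_cast; ring
        _ ≤ ((3*n : ℕ) : ℝ) := by exact_mod_cast h
        _ = 3*(n:ℝ) := by push_cast; ring
    calc (Nat.card {P : Fin (2 * n + 2 + 1) → Multiset ℕ // IsGame n P ∧
            16 * (n : ℝ) / Real.log n ≤ pRemoves n P} : ℝ)
        ≤ (6:ℝ)^(2*n+2) * (K:ℝ)^M := hcard
      _ ≤ (6:ℝ)^(2*n+2) * ((3*(n:ℝ))^((1:ℝ)/2))^M := by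
          gcongr
      _ = (6:ℝ)^(2*n+2) * (3*(n:ℝ))^((M:ℝ)/2) := by
          rw [← Real.rpow_natCast ((3*(n:ℝ))^((1:ℝ)/2)) M,
            ← Real.rpow_mul (by positivity)]
          ring_nf
      _ ≤ (6:ℝ)^(2*n+2) * (3*(n:ℝ))^(((n:ℝ)+1) - 8*(n:ℝ)/Real.log n) := by
          apply mul_le_mul_of_nonneg_left _ (by positivity)
          exact Real.rpow_le_rpow_of_exponent_le (by linarith) hexpo
      _ = (6:ℝ)^(2*n+2) * ((3*(n:ℝ))^((n:ℝ)+1) * (3*(n:ℝ))^(-(8*(n:ℝ)/Real.log n))) := by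
          rw [← Real.rpow_add (by positivity)]
          ring_nf
      _ ≤ (6:ℝ)^(2*n+2) * ((3*(n:ℝ))^((n:ℝ)+1) * Real.exp (-(8*(n:ℝ)))) := by
          apply mul_le_mul_of_nonneg_left _ (by positivity)
          apply mul_le_mul_of_nonneg_left _ (by positivity)
          · rw [Real.rpow_def_of_pos (by positivity)]
            apply Real.exp_le_exp.2
            have hlog3n : Real.log (n:ℝ) ≤ Real.log (3*(n:ℝ)) :=
              Real.log_le_log hn0R (by linarith)
            have hq : (0:ℝ) ≤ 8*(n:ℝ)/Real.log n := by positivity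
            have hqrel : (8*(n:ℝ)/Real.log n) * Real.log n = 8*(n:ℝ) := by
              field_simp
            nlinarith [mul_le_mul_of_nonneg_left hlog3n hq]
      _ ≤ (1/2:ℝ)^(n:ℝ) * (n:ℝ)^(n:ℝ) := by
          have h3n : (3*(n:ℝ))^((n:ℝ)+1)
              = (3:ℝ)^((n:ℝ)+1) * (n:ℝ)^((n:ℝ)+1) :=
            Real.mul_rpow (by norm_num) hn0R.le
          have hA : (3:ℝ)^((n:ℝ)+1) = 3^n * 3 := by
            rw [Real.rpow_add (by norm_num), Real.rpow_one, Real.rpow_natCast]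
          have hB : (n:ℝ)^((n:ℝ)+1) = (n:ℝ)^(n:ℝ) * n := by
            rw [Real.rpow_add hn0R, Real.rpow_one]
          have hC : (6:ℝ)^(2*n+2) = 36 * 36^n := by
            rw [pow_add, pow_mul]; norm_num; ring
          have hD : Real.exp (-(8*(n:ℝ))) = ((Real.exp 8)^n)⁻¹ := by
            rw [Real.exp_neg, mul_comm, Real.exp_nat_mul]
          rw [h3n, hA, hB, hC, hD]
          have hscal : (36:ℝ) * 36^n * (3^n * 3 * ((n:ℝ))) * ((Real.exp 8)^n)⁻¹
              ≤ (1/2:ℝ)^n := by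
            have h108 : (108:ℝ) * n ≤ 6^n := by
              have := nat_growth n (by omega)
              calc (108:ℝ) * n = ((108 * n : ℕ) : ℝ) := by push_cast; ring
                _ ≤ ((6^n : ℕ) : ℝ) := by exact_mod_cast this
                _ = (6:ℝ)^n := by push_cast; ring
            have hepos : (0:ℝ) < (Real.exp 8)^n := pow_pos (Real.exp_pos 8) n
            calc (36:ℝ) * 36^n * (3^n * 3 * ((n:ℝ))) * ((Real.exp 8)^n)⁻¹
                = (108 * (n:ℝ) * 108^n) * ((Real.exp 8)^n)⁻¹ := by
                  rw [show (108:ℝ)^n = 36^n * 3^n from by rw [← mul_pow]; norm_num]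
                  ring
              _ ≤ ((6:ℝ)^n * 108^n) * ((Real.exp 8)^n)⁻¹ := by
                  gcongr
              _ = (648:ℝ)^n * ((Real.exp 8)^n)⁻¹ := by
                  rw [← mul_pow]; norm_num
              _ ≤ (Real.exp 8 / 2)^n * ((Real.exp 8)^n)⁻¹ := by
                  apply mul_le_mul_of_nonneg_right _ (by positivity)
                  apply pow_le_pow_left₀ (by norm_num)
                  have := exp8_lb; linarith
              _ = (1/2:ℝ)^n := by
                  rw [div_pow, div_pow]
                  field_simp
                  ring
          calc (36:ℝ) * 36^n * (3^n * 3 * ((n:ℝ)^(n:ℝ) * n) * ((Real.exp 8)^n)⁻¹)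
              = ((36:ℝ) * 36^n * (3^n * 3 * ((n:ℝ))) * ((Real.exp 8)^n)⁻¹)
                  * (n:ℝ)^(n:ℝ) := by ring
            _ ≤ (1/2:ℝ)^n * (n:ℝ)^(n:ℝ) := by
                apply mul_le_mul_of_nonneg_right hscal
                exact Real.rpow_nonneg hn0R.le _
            _ = (1/2:ℝ)^(n:ℝ) * (n:ℝ)^(n:ℝ) := by
                rw [show ((1:ℝ)/2)^(n:ℕ) = ((1:ℝ)/2)^((n:ℕ):ℝ)
                  from (Real.rpow_natCast _ n).symm]
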